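/- The minimum sum-subspace distance of the lifted s-interleaved linearized Reed–Solomon code is 2(n_t − k + 1); i.e., for distinct message tuples f ≠ g, d_{ΣS}(V(f), V(g)) ≥ 2(n_t − k + 1), and this bound is attained. -/

import Mathlib

open Polynomial Finset

noncomputable section

variable {Fq F : Type*} [Field Fq] [Fintype Fq] [Field F] [Fintype F] [Algebra Fq F]

/-- Generalized power `N_i(a) = σ^{i-1}(a)⋯σ(a)a`, with `N_0(a) = 1`. -/
def genNorm (σ : F → F) (a : F) : ℕ → F
  | 0 => 1
  | i + 1 => σ^[i] a * genNorm σ a i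

/-- Generalized operator evaluation `f(b)_a = Σ_i f_i σ^i(b) N_i(a)`. -/
def opEval (σ : F → F) (f : Polynomial F) (a b : F) : F :=
  ∑ i ∈ f.support, f.coeff i * σ^[i] b * genNorm σ a i

/-- The lifted subspace `V_i(f)`: the `F_q`-span of the rows
`(β_j, f^{(1)}(β_j)_{a},…,f^{(s)}(β_j)_{a})`, with σ the Frobenius `x ↦ x^q`. -/
def liftedSpace (Fq : Type*) [Field Fq] [Fintype Fq] {F : Type*} [Field F]
    [Algebra Fq F] {n s : ℕ} (a : F) (β : Fin n → F) (f : Fin s → Polynomial F) :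
    Submodule Fq (F × (Fin s → F)) :=
  Submodule.span Fq (Set.range (fun j : Fin n =>
    ((β j, fun l : Fin s => opEval (fun x : F => x ^ Fintype.card Fq) (f l) a (β j)) :
      F × (Fin s → F))))

namespace LILRS

/-- abbreviation for the Frobenius `x ↦ x^q`. -/
abbrev sfun (Fq : Type*) [Fintype Fq] (F : Type*) [Monoid F] : F → F :=
  fun x => x ^ Fintype.card Fq

variable (Fq)

/-- Frobenius `x ↦ x^q` as a ring hom on `F`. -/
def frobQ : F →+* F where
  toFun x := x ^ Fintype.card Fq
  map_one' := one_pow _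
  map_mul' x y := mul_pow x y _
  map_zero' := zero_pow Fintype.card_ne_zero
  map_add' x y := by
    haveI : CharP Fq (ringChar Fq) := ringChar.charP Fq
    haveI : Fact (ringChar Fq).Prime := ⟨CharP.char_is_prime Fq (ringChar Fq)⟩
    haveI : CharP F (ringChar Fq) :=
      charP_of_injective_algebraMap (algebraMap Fq F).injective _
    obtain ⟨m, -, hm⟩ := FiniteField.card Fq (ringChar Fq)
    simp only [hm]
    exact add_pow_char_pow x y (ringChar Fq) (m : ℕ)

variable {Fq}

lemma frobQ_apply (x : F) : frobQ Fq x = x ^ Fintype.card Fq := rfl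

lemma sfun_eq_frobQ : sfun Fq F = frobQ Fq := rfl

lemma sfun_iter_apply (i : ℕ) (b : F) :
    (sfun Fq F)^[i] b = b ^ (Fintype.card Fq) ^ i := by
  induction i with
  | zero => simp
  | succ i ih => rw [Function.iterate_succ_apply', ih, pow_succ, pow_mul]

lemma sfun_iter_add (i : ℕ) (x y : F) :
    (sfun Fq F)^[i] (x + y) = (sfun Fq F)^[i] x + (sfun Fq F)^[i] y := by
  induction i with
  | zero => simp
  | succ i ih =>
      rw [Function.iterate_succ_apply', Function.iterate_succ_apply',
        Function.iterate_succ_apply', ih]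
      exact (frobQ Fq).map_add _ _

lemma sfun_iter_mul (i : ℕ) (x y : F) :
    (sfun Fq F)^[i] (x * y) = (sfun Fq F)^[i] x * (sfun Fq F)^[i] y := by
  simp only [sfun_iter_apply, mul_pow]

lemma sfun_iter_zero (i : ℕ) : (sfun Fq F)^[i] (0 : F) = 0 := by
  simp only [sfun_iter_apply]
  exact zero_pow (pow_ne_zero _ Fintype.card_ne_zero)

lemma sfun_iter_algebraMap (i : ℕ) (l : Fq) :
    (sfun Fq F)^[i] (algebraMap Fq F l) = algebraMap Fq F l := by
  simp only [sfun_iter_apply, ← map_pow, FiniteField.pow_card_pow]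

lemma opEval_eq_sum_range {f : F[X]} {N : ℕ} (hN : f.natDegree < N) (a b : F) :
    opEval (sfun Fq F) f a b
      = ∑ i ∈ range N, f.coeff i * (sfun Fq F)^[i] b * genNorm (sfun Fq F) a i := by
  refine Finset.sum_subset (supp_subset_range hN) ?_
  intro i _ hi
  rw [notMem_support_iff.mp hi, zero_mul, zero_mul]

lemma opEval_poly_add (f g : F[X]) (a b : F) :
    opEval (sfun Fq F) (f + g) a b
      = opEval (sfun Fq F) f a b + opEval (sfun Fq F) g a b := by
  rw [opEval_eq_sum_range (f := f + g)
      (N := (f + g).natDegree + f.natDegree + g.natDegree + 1) (by omega),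
    opEval_eq_sum_range (f := f)
      (N := (f + g).natDegree + f.natDegree + g.natDegree + 1) (by omega),
    opEval_eq_sum_range (f := g)
      (N := (f + g).natDegree + f.natDegree + g.natDegree + 1) (by omega),
    ← Finset.sum_add_distrib]
  refine Finset.sum_congr rfl fun i _ => ?_
  rw [coeff_add]; ring

lemma opEval_poly_zero (a b : F) : opEval (sfun Fq F) (0 : F[X]) a b = 0 := by
  simp [opEval]

lemma opEval_poly_neg (f : F[X]) (a b : F) :
    opEval (sfun Fq F) (-f) a b = - opEval (sfun Fq F) f a b := by
  have := opEval_poly_add (Fq := Fq) (f := f) (g := -f) a b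
  simp only [add_neg_cancel, opEval_poly_zero] at this
  exact eq_neg_of_add_eq_zero_right this.symm

lemma opEval_poly_sub (f g : F[X]) (a b : F) :
    opEval (sfun Fq F) (f - g) a b
      = opEval (sfun Fq F) f a b - opEval (sfun Fq F) g a b := by
  rw [sub_eq_add_neg, opEval_poly_add, opEval_poly_neg, sub_eq_add_neg]

lemma opEval_C_mul (c : F) (f : F[X]) (a b : F) :
    opEval (sfun Fq F) (C c * f) a b = c * opEval (sfun Fq F) f a b := by
  rw [opEval_eq_sum_range (f := C c * f) (N := f.natDegree + 1)
      (Nat.lt_succ_of_le (natDegree_C_mul_le c f)),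
    opEval_eq_sum_range (f := f) (N := f.natDegree + 1) (Nat.lt_succ_self _),
    Finset.mul_sum]
  refine Finset.sum_congr rfl fun i _ => ?_
  rw [coeff_C_mul]; ring

lemma opEval_monomial (t : ℕ) (e : F) (a b : F) :
    opEval (sfun Fq F) (C e * X ^ t) a b
      = e * (sfun Fq F)^[t] b * genNorm (sfun Fq F) a t := by
  by_cases he : e = 0
  · simp [he, opEval_poly_zero]
  rw [C_mul_X_pow_eq_monomial, opEval, support_monomial t he, Finset.sum_singleton,
    coeff_monomial, if_pos rfl]

lemma opEval_add_arg (f : F[X]) (a x y : F) :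
    opEval (sfun Fq F) f a (x + y)
      = opEval (sfun Fq F) f a x + opEval (sfun Fq F) f a y := by
  rw [opEval, opEval, opEval, ← Finset.sum_add_distrib]
  refine Finset.sum_congr rfl fun i _ => ?_
  rw [sfun_iter_add]; ring

lemma opEval_smul_arg (f : F[X]) (a : F) (l : Fq) (x : F) :
    opEval (sfun Fq F) f a (l • x) = l • opEval (sfun Fq F) f a x := by
  rw [opEval, opEval, Finset.smul_sum]
  refine Finset.sum_congr rfl fun i _ => ?_
  rw [Algebra.smul_def, Algebra.smul_def, sfun_iter_mul, sfun_iter_algebraMap]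
  ring

lemma opEval_zero_arg (f : F[X]) (a : F) : opEval (sfun Fq F) f a 0 = 0 := by
  have := opEval_add_arg (Fq := Fq) f a 0 0
  simp only [add_zero] at this
  exact (left_eq_add.mp this)

variable (Fq) in
/-- `b ↦ f(b)_a` as an `Fq`-linear map. -/
def opLinear (a : F) (f : F[X]) : F →ₗ[Fq] F where
  toFun b := opEval (sfun Fq F) f a b
  map_add' x y := opEval_add_arg f a x y
  map_smul' l x := opEval_smul_arg f a l x

@[simp] lemma opLinear_apply (a : F) (f : F[X]) (b : F) :
    opLinear Fq a f b = opEval (sfun Fq F) f a b := rfl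

lemma genNorm_succ' (a : F) (i : ℕ) :
    (genNorm (sfun Fq F) a i) ^ (Fintype.card Fq) * a = genNorm (sfun Fq F) a (i + 1) := by
  induction i with
  | zero => simp [genNorm]
  | succ i ih =>
      show (genNorm (sfun Fq F) a (i+1)) ^ Fintype.card Fq * a = _
      rw [show genNorm (sfun Fq F) a (i+1) = (sfun Fq F)^[i] a * genNorm (sfun Fq F) a i
          from rfl, mul_pow]
      have h1 : ((sfun Fq F)^[i] a) ^ Fintype.card Fq = (sfun Fq F)^[i+1] a := by
        rw [Function.iterate_succ_apply']
      rw [mul_assoc, ih, h1]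
      rfl

lemma opEval_X_mul_map (f : F[X]) (a b : F) :
    opEval (sfun Fq F) (X * f.map (frobQ Fq)) a b
      = (opEval (sfun Fq F) f a b) ^ (Fintype.card Fq) * a := by
  set N := f.natDegree + 1 with hN
  have hd : (X * f.map (frobQ Fq)).natDegree < N + 1 := by
    calc (X * f.map (frobQ Fq)).natDegree ≤ 1 + (f.map (frobQ Fq)).natDegree :=
          natDegree_mul_le.trans (by simp)
      _ ≤ 1 + f.natDegree := by
          have := natDegree_map_le (f := frobQ Fq) (p := f)
          omega
      _ < N + 1 := by omega
  rw [opEval_eq_sum_range hd, Finset.sum_range_succ']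
  have h0 : (X * f.map (frobQ Fq)).coeff 0 = 0 := by simp
  rw [h0, zero_mul, zero_mul, add_zero,
    opEval_eq_sum_range (f := f) (N := N) (Nat.lt_succ_self _)]
  have hmap : (∑ i ∈ range N, f.coeff i * (sfun Fq F)^[i] b * genNorm (sfun Fq F) a i)
        ^ Fintype.card Fq
      = ∑ i ∈ range N,
          frobQ Fq (f.coeff i * (sfun Fq F)^[i] b * genNorm (sfun Fq F) a i) :=
    map_sum (frobQ Fq) _ _
  rw [hmap, Finset.sum_mul]
  refine Finset.sum_congr rfl fun i _ => ?_
  rw [coeff_X_mul, coeff_map, map_mul, map_mul, Function.iterate_succ_apply',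
    ← genNorm_succ']
  simp only [frobQ_apply, sfun]
  ring


lemma opEval_C (c a b : F) : opEval (sfun Fq F) (C c) a b = c * b := by
  have := opEval_monomial (Fq := Fq) 0 c a b
  simpa [genNorm] using this

lemma opEval_X_sub_C (c a u : F) :
    opEval (sfun Fq F) (X - C c) a u = u ^ (Fintype.card Fq) * a - c * u := by
  have hX : opEval (sfun Fq F) (X : F[X]) a u = u ^ (Fintype.card Fq) * a := by
    have := opEval_monomial (Fq := Fq) 1 1 a u
    simpa [genNorm] using this
  rw [opEval_poly_sub, hX, opEval_C]

variable (Fq) in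
/-- The quotient in right division of `C e * X^t` by `X - C c`. -/
def divMonG (c : F) : F → ℕ → F[X]
  | _, 0 => 0
  | e, t+1 => C e * X ^ t + divMonG c (e * (sfun Fq F)^[t] c) t

variable (Fq) in
/-- The remainder in right division of `C e * X^t` by `X - C c`. -/
def divMonR (c : F) : F → ℕ → F
  | e, 0 => e
  | e, t+1 => divMonR c (e * (sfun Fq F)^[t] c) t

lemma divMon_eval (c : F) (t : ℕ) (e a u : F) :
    opEval (sfun Fq F) (C e * X ^ t) a u
      = opEval (sfun Fq F) (divMonG Fq c e t) a (opEval (sfun Fq F) (X - C c) a u)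
        + divMonR Fq c e t * u := by
  induction t generalizing e with
  | zero =>
      simp only [divMonG, divMonR, pow_zero, mul_one, opEval_C, opEval_poly_zero, zero_add]
  | succ t ih =>
      set w := opEval (sfun Fq F) (X - C c) a u with hw
      have hEw : opEval (sfun Fq F) (C e * X ^ t) a w
            = opEval (sfun Fq F) (C e * X ^ (t+1)) a u
              - opEval (sfun Fq F) (C (e * (sfun Fq F)^[t] c) * X ^ t) a u := by
        have hsub : w = u ^ (Fintype.card Fq) * a - c * u := opEval_X_sub_C c a u
        have hmap := (opLinear Fq a (C e * X ^ t)).map_sub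
          (u ^ (Fintype.card Fq) * a) (c * u)
        simp only [opLinear_apply] at hmap
        rw [hsub, hmap]
        congr 1
        · have h1 : (sfun Fq F)^[t] (u ^ Fintype.card Fq) = (sfun Fq F)^[t+1] u :=
            (Function.iterate_succ_apply (sfun Fq F) t u).symm
          rw [opEval_monomial, opEval_monomial, sfun_iter_mul, h1,
            show genNorm (sfun Fq F) a (t+1)
              = (sfun Fq F)^[t] a * genNorm (sfun Fq F) a t from rfl]
          ring
        · rw [opEval_monomial, opEval_monomial, sfun_iter_mul]
          ring
      have hIH := ih (e * (sfun Fq F)^[t] c)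
      rw [show divMonG Fq c e (t+1) = C e * X ^ t + divMonG Fq c (e * (sfun Fq F)^[t] c) t
        from rfl, show divMonR Fq c e (t+1) = divMonR Fq c (e * (sfun Fq F)^[t] c) t from rfl,
        opEval_poly_add, hEw, hIH]
      ring

lemma divMonG_coeff_of_le (c e : F) (t j : ℕ) (hj : t ≤ j) :
    (divMonG Fq c e t).coeff j = 0 := by
  induction t generalizing e j with
  | zero => simp [divMonG]
  | succ t ih =>
      rw [show divMonG Fq c e (t+1) = C e * X ^ t + divMonG Fq c (e * (sfun Fq F)^[t] c) t
        from rfl, coeff_add, coeff_C_mul, coeff_X_pow, if_neg (by omega), mul_zero, zero_add]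
      exact ih _ _ (by omega)

lemma divMonG_coeff_top (c e : F) (t : ℕ) :
    (divMonG Fq c e (t+1)).coeff t = e := by
  rw [show divMonG Fq c e (t+1) = C e * X ^ t + divMonG Fq c (e * (sfun Fq F)^[t] c) t
    from rfl, coeff_add, coeff_C_mul, coeff_X_pow, if_pos rfl, mul_one,
    divMonG_coeff_of_le _ _ _ _ le_rfl, add_zero]

variable (Fq) in
/-- The quotient in right division of `h` by `X - C c`. -/
def Gdiv (c : F) (h : F[X]) : F[X] := ∑ t ∈ h.support, divMonG Fq c (h.coeff t) t

variable (Fq) in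
/-- The remainder in right division of `h` by `X - C c`. -/
def Rdiv (c : F) (h : F[X]) : F := ∑ t ∈ h.support, divMonR Fq c (h.coeff t) t

lemma opEval_finset_sum {ι : Type*} (s : Finset ι) (P : ι → F[X]) (a u : F) :
    opEval (sfun Fq F) (∑ t ∈ s, P t) a u = ∑ t ∈ s, opEval (sfun Fq F) (P t) a u := by
  classical
  induction s using Finset.cons_induction with
  | empty => simp [opEval_poly_zero]
  | cons i s hi ih =>
      rw [Finset.sum_cons, Finset.sum_cons, opEval_poly_add, ih]

lemma opEval_support_decomp (h : F[X]) (a u : F) :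
    opEval (sfun Fq F) h a u
      = ∑ t ∈ h.support, opEval (sfun Fq F) (C (h.coeff t) * X ^ t) a u := by
  rw [opEval]
  exact Finset.sum_congr rfl fun t _ => (opEval_monomial _ _ _ _).symm

/-- Right division identity at the level of operator evaluation. -/
lemma div_eval (c : F) (h : F[X]) (a u : F) :
    opEval (sfun Fq F) h a u
      = opEval (sfun Fq F) (Gdiv Fq c h) a (opEval (sfun Fq F) (X - C c) a u)
        + Rdiv Fq c h * u := by
  rw [opEval_support_decomp h, Gdiv, Rdiv, opEval_finset_sum, Finset.sum_mul,
    ← Finset.sum_add_distrib]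
  exact Finset.sum_congr rfl fun t _ => divMon_eval c t (h.coeff t) a u

lemma Gdiv_coeff_of_le (c : F) (h : F[X]) (j : ℕ) (hj : h.natDegree ≤ j) :
    (Gdiv Fq c h).coeff j = 0 := by
  rw [Gdiv, finset_sum_coeff]
  refine Finset.sum_eq_zero fun t ht => ?_
  exact divMonG_coeff_of_le _ _ _ _ (le_trans (le_natDegree_of_mem_supp t ht) hj)

lemma Gdiv_natDegree_le (c : F) (h : F[X]) :
    (Gdiv Fq c h).natDegree ≤ h.natDegree - 1 := by
  rw [natDegree_le_iff_coeff_eq_zero]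
  intro N hN
  exact Gdiv_coeff_of_le c h N (by omega)

lemma Gdiv_coeff_top (c : F) (h : F[X]) (h0 : h ≠ 0) (hd : 1 ≤ h.natDegree) :
    (Gdiv Fq c h).coeff (h.natDegree - 1) = h.coeff h.natDegree := by
  rw [Gdiv, finset_sum_coeff]
  rw [Finset.sum_eq_single_of_mem h.natDegree (natDegree_mem_support_of_nonzero h0)
    (fun t ht hne => divMonG_coeff_of_le _ _ _ _
      (by have := le_natDegree_of_mem_supp t ht; omega))]
  have hthis : h.natDegree = (h.natDegree - 1) + 1 := by omega
  have h2 := divMonG_coeff_top (Fq := Fq) c (h.coeff h.natDegree) (h.natDegree - 1)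
  rw [← hthis] at h2
  exact h2

lemma Gdiv_ne_zero (c : F) (h : F[X]) (h0 : h ≠ 0) (hd : 1 ≤ h.natDegree) :
    Gdiv Fq c h ≠ 0 := by
  intro hG
  have := Gdiv_coeff_top (Fq := Fq) c h h0 hd
  rw [hG, coeff_zero] at this
  exact coeff_ne_zero_of_eq_degree (degree_eq_natDegree h0) this.symm

lemma Gdiv_natDegree (c : F) (h : F[X]) (h0 : h ≠ 0) (hd : 1 ≤ h.natDegree) :
    (Gdiv Fq c h).natDegree = h.natDegree - 1 := by
  refine le_antisymm (Gdiv_natDegree_le c h) ?_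
  refine le_natDegree_of_ne_zero ?_
  rw [Gdiv_coeff_top c h h0 hd]
  exact mt leadingCoeff_eq_zero.mp h0


lemma exists_algebraMap_eq {t : F} (ht : t ^ Fintype.card Fq = t) :
    ∃ l : Fq, algebraMap Fq F l = t := by
  classical
  have hq : 1 < Fintype.card Fq := Fintype.one_lt_card
  set P : F[X] := X ^ Fintype.card Fq - X with hP
  have hP0 : P ≠ 0 := by
    intro h0
    have hc : P.coeff (Fintype.card Fq) = 0 := by rw [h0]; simp
    rw [hP, coeff_sub, coeff_X_pow, if_pos rfl, coeff_X, if_neg (by omega)] at hc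
    norm_num at hc
  set A : Finset F := Finset.image (algebraMap Fq F) Finset.univ with hA
  set R : Finset F := P.roots.toFinset with hR
  have hAR : A ⊆ R := by
    intro x hx
    rw [hA, Finset.mem_image] at hx
    obtain ⟨l, -, rfl⟩ := hx
    rw [hR, Multiset.mem_toFinset, mem_roots hP0]
    show P.eval _ = 0
    rw [hP]
    simp only [eval_sub, eval_pow, eval_X]
    rw [← map_pow, FiniteField.pow_card, sub_self]
  have hcardA : A.card = Fintype.card Fq := by
    rw [hA, Finset.card_image_of_injective _ (algebraMap Fq F).injective, Finset.card_univ]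
  have hcardR : R.card ≤ Fintype.card Fq := by
    refine le_trans (Multiset.toFinset_card_le _) (le_trans (card_roots' P) ?_)
    refine le_trans (natDegree_sub_le _ _) ?_
    simp [natDegree_X_pow]
    omega
  have hRA : R = A := (Finset.eq_of_subset_of_card_le hAR (by omega)).symm
  have htR : t ∈ R := by
    rw [hR, Multiset.mem_toFinset, mem_roots hP0]
    show P.eval t = 0
    rw [hP]
    simp [ht]
  rw [hRA, hA, Finset.mem_image] at htR
  obtain ⟨l, -, hl⟩ := htR
  exact ⟨l, hl⟩

lemma finrank_comap_le (ψ : F →ₗ[Fq] F) (K K' : Submodule Fq F)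
    (hh : K ≤ K'.comap ψ) :
    Module.finrank Fq K ≤ Module.finrank Fq K' + Module.finrank Fq (LinearMap.ker ψ) := by
  have h1 := LinearMap.finrank_range_add_finrank_ker (ψ ∘ₗ K.subtype)
  have h2 : LinearMap.range (ψ ∘ₗ K.subtype) ≤ K' := by
    rintro x ⟨y, rfl⟩
    exact hh y.2
  have h3 : Module.finrank Fq (LinearMap.range (ψ ∘ₗ K.subtype))
      ≤ Module.finrank Fq K' := Submodule.finrank_mono h2
  have h4 : Module.finrank Fq (LinearMap.ker (ψ ∘ₗ K.subtype))
      ≤ Module.finrank Fq (LinearMap.ker ψ) := by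
    refine LinearMap.finrank_le_finrank_of_injective
      (f := LinearMap.codRestrict (LinearMap.ker ψ)
        (K.subtype ∘ₗ (LinearMap.ker (ψ ∘ₗ K.subtype)).subtype) ?_) ?_
    · rintro ⟨x, hx⟩
      simpa [LinearMap.mem_ker] using hx
    · intro x y hxy
      have := congrArg (Subtype.val) hxy
      simp only [LinearMap.codRestrict_apply, LinearMap.coe_comp, Function.comp_apply,
        Submodule.coe_subtype] at this
      exact Subtype.ext (Subtype.ext this)
  omega

lemma psi_mem_ker_iff (a' c u : F) :
    u ∈ LinearMap.ker (opLinear Fq a' (X - C c))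
      ↔ u ^ (Fintype.card Fq) * a' = c * u := by
  rw [LinearMap.mem_ker, opLinear_apply, opEval_X_sub_C, sub_eq_zero]

lemma psi_ker_le_one (a' c : F) (ha' : a' ≠ 0) :
    Module.finrank Fq (LinearMap.ker (opLinear Fq a' (X - C c))) ≤ 1 := by
  by_cases hbot : LinearMap.ker (opLinear Fq a' (X - C c)) = ⊥
  · rw [hbot, finrank_bot]; omega
  obtain ⟨u2, hu2m, hu2⟩ := (Submodule.ne_bot_iff _).mp hbot
  rw [psi_mem_ker_iff] at hu2m
  have hc0 : c ≠ 0 := by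
    intro h0
    rw [h0, zero_mul] at hu2m
    exact hu2 (pow_eq_zero_iff Fintype.card_ne_zero |>.mp
      ((mul_eq_zero.mp hu2m).resolve_right ha'))
  have hle : LinearMap.ker (opLinear Fq a' (X - C c)) ≤ Submodule.span Fq {u2} := by
    intro u1 hu1m
    rw [psi_mem_ker_iff] at hu1m
    by_cases hu1 : u1 = 0
    · rw [hu1]; exact Submodule.zero_mem _
    have hcross : u1 ^ Fintype.card Fq * u2 = u1 * u2 ^ Fintype.card Fq := by
      have h6 : u1 ^ Fintype.card Fq * u2 * a' = u1 * u2 ^ Fintype.card Fq * a' := by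
        rw [show u1 ^ Fintype.card Fq * u2 * a' = u1 ^ Fintype.card Fq * a' * u2 by ring,
          hu1m, show c * u1 * u2 = u1 * (c * u2) by ring, ← hu2m]; ring
      exact mul_right_cancel₀ ha' h6
    have ht : (u1 / u2) ^ Fintype.card Fq = u1 / u2 := by
      rw [div_pow]
      rw [div_eq_div_iff (pow_ne_zero _ hu2) hu2]
      exact hcross
    obtain ⟨l, hl⟩ := exists_algebraMap_eq ht
    rw [Submodule.mem_span_singleton]
    refine ⟨l, ?_⟩
    rw [Algebra.smul_def, hl, div_mul_cancel₀ _ hu2]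
  calc Module.finrank Fq (LinearMap.ker (opLinear Fq a' (X - C c)))
      ≤ Module.finrank Fq (Submodule.span Fq ({u2} : Set F)) := Submodule.finrank_mono hle
    _ = 1 := finrank_span_singleton hu2

lemma psi_ker_ne_bot_conj (a' c : F) (h : LinearMap.ker (opLinear Fq a' (X - C c)) ≠ ⊥) :
    ∃ u : F, u ≠ 0 ∧ u ^ Fintype.card Fq * a' * u⁻¹ = c := by
  obtain ⟨u, hum, hu⟩ := (Submodule.ne_bot_iff _).mp h
  rw [psi_mem_ker_iff] at hum
  refine ⟨u, hu, ?_⟩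
  field_simp
  linear_combination hum

/-- Key lemma: the sum over pairwise non-conjugate evaluation parameters of
the `Fq`-dimensions of the root spaces of a nonzero skew polynomial is at
most its degree. -/
theorem sum_finrank_ker_le {ℓ : ℕ} (a : Fin ℓ → F) (ha0 : ∀ i, a i ≠ 0)
    (ha : ∀ i j, i ≠ j → ¬∃ c : F, c ≠ 0 ∧ c ^ Fintype.card Fq * a i * c⁻¹ = a j)
    (h : F[X]) (h0 : h ≠ 0) :
    ∑ i, Module.finrank Fq (LinearMap.ker (opLinear Fq (a i) h)) ≤ h.natDegree := by
  suffices H : ∀ d (h : F[X]), h ≠ 0 → h.natDegree = d →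
      ∑ i, Module.finrank Fq (LinearMap.ker (opLinear Fq (a i) h)) ≤ d from
    H h.natDegree h h0 rfl
  intro d
  induction d with
  | zero =>
      intro h h0 hd
      obtain ⟨e, he⟩ := natDegree_eq_zero.mp hd
      have he0 : e ≠ 0 := by rintro rfl; exact h0 (by rw [← he, map_zero])
      have : ∀ i, LinearMap.ker (opLinear Fq (a i) h) = ⊥ := by
        intro i
        rw [LinearMap.ker_eq_bot']
        intro u hu
        rw [opLinear_apply, ← he, opEval_C] at hu
        exact (mul_eq_zero.mp hu).resolve_left he0
      simp [this, finrank_bot]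
  | succ d ih =>
      intro h h0 hd
      by_cases hK : ∀ i, LinearMap.ker (opLinear Fq (a i) h) = ⊥
      · have hz : ∑ i, Module.finrank Fq (LinearMap.ker (opLinear Fq (a i) h)) = 0 :=
          Finset.sum_eq_zero fun i _ => by rw [hK i]; exact finrank_bot Fq F
        omega
      push_neg at hK
      obtain ⟨i0, hi0⟩ := hK
      obtain ⟨b, hbker, hb0⟩ := (Submodule.ne_bot_iff _).mp hi0
      set c : F := b ^ Fintype.card Fq * (a i0) * b⁻¹ with hc
      set g : F[X] := Gdiv Fq c h with hg
      have hd1 : 1 ≤ h.natDegree := by omega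
      have hgne : g ≠ 0 := Gdiv_ne_zero c h h0 hd1
      have hgdeg : g.natDegree = d := by rw [hg, Gdiv_natDegree c h h0 hd1, hd]; omega
      have hψb : opEval (sfun Fq F) (X - C c) (a i0) b = 0 := by
        rw [opEval_X_sub_C, hc]
        field_simp
        simp
      have hb' : opEval (sfun Fq F) h (a i0) b = 0 := hbker
      have hr : Rdiv Fq c h = 0 := by
        have hde := div_eval (Fq := Fq) c h (a i0) b
        rw [hb', hψb, opEval_zero_arg, zero_add] at hde
        rcases mul_eq_zero.mp hde.symm with h' | h'
        · exact h'
        · exact absurd h' hb0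
      have hkey : ∀ i u, opEval (sfun Fq F) h (a i) u
          = opEval (sfun Fq F) g (a i) (opEval (sfun Fq F) (X - C c) (a i) u) := by
        intro i u
        have hde := div_eval (Fq := Fq) c h (a i) u
        rw [hr, zero_mul, add_zero] at hde
        exact hde
      have hsub : ∀ i, LinearMap.ker (opLinear Fq (a i) h)
          ≤ (LinearMap.ker (opLinear Fq (a i) g)).comap (opLinear Fq (a i) (X - C c)) := by
        intro i u hu
        rw [LinearMap.mem_ker, opLinear_apply] at hu
        rw [Submodule.mem_comap, LinearMap.mem_ker, opLinear_apply, opLinear_apply,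
          ← hkey i u]
        exact hu
      have hbd : ∀ i, Module.finrank Fq (LinearMap.ker (opLinear Fq (a i) h))
          ≤ Module.finrank Fq (LinearMap.ker (opLinear Fq (a i) g))
            + Module.finrank Fq (LinearMap.ker (opLinear Fq (a i) (X - C c))) :=
        fun i => finrank_comap_le _ _ _ (hsub i)
      have hψ0 : ∀ i, i ≠ i0 →
          Module.finrank Fq (LinearMap.ker (opLinear Fq (a i) (X - C c))) = 0 := by
        intro i hne
        by_contra hne0
        have hker : LinearMap.ker (opLinear Fq (a i) (X - C c)) ≠ ⊥ := by
          intro hb'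
          rw [hb', finrank_bot] at hne0
          exact hne0 rfl
        obtain ⟨u, hu0, huc⟩ := psi_ker_ne_bot_conj (a i) c hker
        refine ha i0 i (fun e => hne (e.symm)) ⟨b * u⁻¹, ?_, ?_⟩
        · exact mul_ne_zero hb0 (inv_ne_zero hu0)
        · rw [← huc] at hc
          have hq : u ^ Fintype.card Fq ≠ 0 := pow_ne_zero _ hu0
          calc (b * u⁻¹) ^ Fintype.card Fq * a i0 * (b * u⁻¹)⁻¹
              = (u ^ Fintype.card Fq)⁻¹ * u * (b ^ Fintype.card Fq * a i0 * b⁻¹) := by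
                rw [mul_pow, inv_pow, mul_inv, inv_inv]; ring
            _ = a i := by
                rw [← hc, show (u ^ Fintype.card Fq)⁻¹ * u * (u ^ Fintype.card Fq * a i * u⁻¹)
                  = (u ^ Fintype.card Fq)⁻¹ * u ^ Fintype.card Fq * (u * u⁻¹) * a i by ring,
                  inv_mul_cancel₀ hq, mul_inv_cancel₀ hu0, one_mul, one_mul]
      have hψi0 : Module.finrank Fq (LinearMap.ker (opLinear Fq (a i0) (X - C c))) ≤ 1 :=
        psi_ker_le_one (a i0) c (ha0 i0)
      have hsumψ : ∑ i, Module.finrank Fq (LinearMap.ker (opLinear Fq (a i) (X - C c)))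
          ≤ 1 := by
        rw [Finset.sum_eq_single_of_mem i0 (Finset.mem_univ _)
          (fun i _ hne => hψ0 i hne)]
        exact hψi0
      calc ∑ i, Module.finrank Fq (LinearMap.ker (opLinear Fq (a i) h))
          ≤ ∑ i, (Module.finrank Fq (LinearMap.ker (opLinear Fq (a i) g))
            + Module.finrank Fq (LinearMap.ker (opLinear Fq (a i) (X - C c)))) :=
            Finset.sum_le_sum fun i _ => hbd i
        _ = (∑ i, Module.finrank Fq (LinearMap.ker (opLinear Fq (a i) g)))
            + ∑ i, Module.finrank Fq (LinearMap.ker (opLinear Fq (a i) (X - C c))) :=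
            Finset.sum_add_distrib
        _ ≤ d + 1 := by
            have := ih g hgne hgdeg
            omega


variable (Fq) in
/-- The tuple-evaluation map `b ↦ (f^{(l)}(b)_a)_l`. -/
def Tmap {s : ℕ} (a : F) (f : Fin s → F[X]) : F →ₗ[Fq] (Fin s → F) :=
  LinearMap.pi (fun l => opLinear Fq a (f l))

variable (Fq) in
/-- The graph map `b ↦ (b, (f^{(l)}(b)_a)_l)`. -/
def Gmap {s : ℕ} (a : F) (f : Fin s → F[X]) : F →ₗ[Fq] F × (Fin s → F) :=
  LinearMap.prod LinearMap.id (Tmap Fq a f)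

@[simp] lemma Gmap_apply {s : ℕ} (a : F) (f : Fin s → F[X]) (b : F) :
    Gmap Fq a f b = (b, fun l => opEval (sfun Fq F) (f l) a b) := rfl

lemma Gmap_injective {s : ℕ} (a : F) (f : Fin s → F[X]) :
    Function.Injective (Gmap Fq a f) := by
  intro x y hxy
  exact congrArg Prod.fst hxy

lemma liftedSpace_eq_map {n s : ℕ} (a : F) (β : Fin n → F) (f : Fin s → F[X]) :
    liftedSpace Fq a β f
      = Submodule.map (Gmap Fq a f) (Submodule.span Fq (Set.range β)) := by
  rw [liftedSpace, Submodule.map_span, ← Set.range_comp]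
  rfl

lemma finrank_liftedSpace {n s : ℕ} (a : F) (β : Fin n → F)
    (hβ : LinearIndependent Fq β) (f : Fin s → F[X]) :
    Module.finrank Fq (liftedSpace Fq a β f) = n := by
  rw [liftedSpace_eq_map]
  rw [← LinearEquiv.finrank_eq
    (Submodule.equivMapOfInjective _ (Gmap_injective a f) (Submodule.span Fq (Set.range β)))]
  rw [finrank_span_eq_card hβ, Fintype.card_fin]

lemma lifted_inf_eq {n s : ℕ} (a : F) (β : Fin n → F) (f g : Fin s → F[X]) :
    liftedSpace Fq a β f ⊓ liftedSpace Fq a β g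
      = Submodule.map (Gmap Fq a f)
          (Submodule.span Fq (Set.range β) ⊓ LinearMap.ker (Tmap Fq a f - Tmap Fq a g)) := by
  rw [liftedSpace_eq_map, liftedSpace_eq_map]
  apply le_antisymm
  · rintro x hx
    rw [Submodule.mem_inf] at hx
    obtain ⟨hxf, hxg⟩ := hx
    rw [Submodule.mem_map] at hxf hxg
    obtain ⟨b, hbW, rfl⟩ := hxf
    obtain ⟨b', hb'W, hb'⟩ := hxg
    have hb1 : b' = b := congrArg Prod.fst hb'
    subst hb1
    have hb2 : Tmap Fq a g b' = Tmap Fq a f b' := congrArg Prod.snd hb'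
    rw [Submodule.mem_map]
    refine ⟨b', Submodule.mem_inf.mpr ⟨hbW, LinearMap.mem_ker.mpr ?_⟩, rfl⟩
    rw [LinearMap.sub_apply, hb2, sub_self]
  · rintro x hx
    rw [Submodule.mem_map] at hx
    obtain ⟨b, hb, rfl⟩ := hx
    rw [Submodule.mem_inf] at hb
    obtain ⟨hbW, hbker⟩ := hb
    rw [LinearMap.mem_ker, LinearMap.sub_apply, sub_eq_zero] at hbker
    rw [Submodule.mem_inf]
    refine ⟨Submodule.mem_map.mpr ⟨b, hbW, rfl⟩, Submodule.mem_map.mpr ⟨b, hbW, ?_⟩⟩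
    show (b, Tmap Fq a g b) = (b, Tmap Fq a f b)
    rw [hbker]

lemma lifted_facts {n s : ℕ} (a : F) (β : Fin n → F) (hβ : LinearIndependent Fq β)
    (f g : Fin s → F[X]) :
    Module.finrank Fq ↥(liftedSpace Fq a β f ⊔ liftedSpace Fq a β g)
        + Module.finrank Fq ↥(liftedSpace Fq a β f ⊓ liftedSpace Fq a β g) = 2 * n
    ∧ Module.finrank Fq ↥(liftedSpace Fq a β f ⊓ liftedSpace Fq a β g)
        = Module.finrank Fq ↥(Submodule.span Fq (Set.range β)
            ⊓ LinearMap.ker (Tmap Fq a f - Tmap Fq a g))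
    ∧ Module.finrank Fq ↥(Submodule.span Fq (Set.range β)
            ⊓ LinearMap.ker (Tmap Fq a f - Tmap Fq a g)) ≤ n := by
  have hsup := Submodule.finrank_sup_add_finrank_inf_eq
    (liftedSpace Fq a β f) (liftedSpace Fq a β g)
  rw [finrank_liftedSpace a β hβ f, finrank_liftedSpace a β hβ g] at hsup
  have hinf : Module.finrank Fq ↥(liftedSpace Fq a β f ⊓ liftedSpace Fq a β g)
      = Module.finrank Fq ↥(Submodule.span Fq (Set.range β)
          ⊓ LinearMap.ker (Tmap Fq a f - Tmap Fq a g)) := by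
    rw [lifted_inf_eq]
    exact (LinearEquiv.finrank_eq
      (Submodule.equivMapOfInjective _ (Gmap_injective a f) _)).symm
  have hle : Module.finrank Fq ↥(Submodule.span Fq (Set.range β)
          ⊓ LinearMap.ker (Tmap Fq a f - Tmap Fq a g)) ≤ n := by
    calc Module.finrank Fq ↥(Submodule.span Fq (Set.range β)
            ⊓ LinearMap.ker (Tmap Fq a f - Tmap Fq a g))
        ≤ Module.finrank Fq ↥(Submodule.span Fq (Set.range β)) :=
          Submodule.finrank_mono inf_le_left
      _ = n := by rw [finrank_span_eq_card hβ, Fintype.card_fin]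
  exact ⟨by omega, hinf, hle⟩

/-- distributing a total `K ≤ ∑ n` into pointwise parts. -/
lemma exists_pointwise_le {ι : Type*} [Fintype ι] (n : ι → ℕ) (K : ℕ) (hK : K ≤ ∑ i, n i) :
    ∃ m : ι → ℕ, (∀ i, m i ≤ n i) ∧ ∑ i, m i = K := by
  classical
  induction K with
  | zero => exact ⟨fun _ => 0, fun i => Nat.zero_le _, by simp⟩
  | succ K ih =>
      obtain ⟨m, hm, hsum⟩ := ih (by omega)
      have : ∃ i, m i < n i := by
        by_contra hcon
        push_neg at hcon
        have : ∑ i, n i ≤ ∑ i, m i := Finset.sum_le_sum fun i _ => hcon i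
        omega
      obtain ⟨i, hi⟩ := this
      refine ⟨Function.update m i (m i + 1), ?_, ?_⟩
      · intro j
        rcases eq_or_ne j i with rfl | hne
        · rw [Function.update_self]; omega
        · rw [Function.update_of_ne hne]; exact hm j
      · rw [Finset.sum_update_of_mem (Finset.mem_univ i)]
        have h2 := Finset.sum_update_of_mem (Finset.mem_univ i) m (m i)
        rw [Function.update_eq_self] at h2
        omega

variable (Fq) in
/-- An annihilator skew polynomial for a list of (parameter, root) pairs. -/
def annPoly : List (F × F) → F[X]
  | [] => 1
  | p :: rest =>
      (X * (annPoly rest).map (frobQ Fq))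
        - C ((opEval (sfun Fq F) (annPoly rest) p.1 p.2) ^ Fintype.card Fq * p.1
              / (opEval (sfun Fq F) (annPoly rest) p.1 p.2)) * annPoly rest

lemma annPoly_step_eval (g : F[X]) (c A b : F) :
    opEval (sfun Fq F) ((X * g.map (frobQ Fq)) - C c * g) A b
      = (opEval (sfun Fq F) g A b) ^ Fintype.card Fq * A - c * opEval (sfun Fq F) g A b := by
  rw [opEval_poly_sub, opEval_X_mul_map, opEval_C_mul]

lemma annPoly_monic_deg (L : List (F × F)) :
    (annPoly Fq L).Monic ∧ (annPoly Fq L).natDegree = L.length := by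
  induction L with
  | nil => exact ⟨monic_one, natDegree_one⟩
  | cons p rest ih =>
      obtain ⟨hmon, hdeg⟩ := ih
      set g := annPoly Fq rest with hgdef
      set c := (opEval (sfun Fq F) g p.1 p.2) ^ Fintype.card Fq * p.1
          / (opEval (sfun Fq F) g p.1 p.2) with hcdef
      have hmapm : (g.map (frobQ Fq)).Monic := hmon.map (frobQ Fq)
      have hXm : (X * g.map (frobQ Fq)).Monic := monic_X.mul hmapm
      have hXdeg : (X * g.map (frobQ Fq)).natDegree = rest.length + 1 := by
        rw [natDegree_mul X_ne_zero hmapm.ne_zero, natDegree_X,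
          hmon.natDegree_map (frobQ Fq), hdeg]
        omega
      have hlt : (C c * g).degree < (X * g.map (frobQ Fq)).degree := by
        have h1 : (C c * g).degree ≤ g.degree := by
          calc (C c * g).degree ≤ (C c).degree + g.degree := degree_mul_le _ _
            _ ≤ 0 + g.degree := add_le_add degree_C_le le_rfl
            _ = g.degree := zero_add _
        have h2 : g.degree = (rest.length : WithBot ℕ) := by
          rw [degree_eq_natDegree hmon.ne_zero, hdeg]
        have h3 : (X * g.map (frobQ Fq)).degree = ((rest.length + 1 : ℕ) : WithBot ℕ) := by
          rw [degree_eq_natDegree hXm.ne_zero, hXdeg]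
        rw [h3]
        refine lt_of_le_of_lt (h1.trans h2.le) ?_
        exact_mod_cast Nat.lt_succ_self _
      have hstep : annPoly Fq (p :: rest) = (X * g.map (frobQ Fq)) - C c * g := rfl
      constructor
      · rw [hstep, sub_eq_add_neg]
        exact hXm.add_of_left (by rw [degree_neg]; exact hlt)
      · rw [hstep]
        have hde := degree_sub_eq_left_of_degree_lt hlt
        rw [List.length_cons, ← hXdeg]
        exact natDegree_eq_of_degree_eq hde
  
lemma annPoly_kills (L : List (F × F)) :
    ∀ p ∈ L, opEval (sfun Fq F) (annPoly Fq L) p.1 p.2 = 0 := by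
  induction L with
  | nil => intro p hp; simp at hp
  | cons hd rest ih =>
      intro p hp
      set g := annPoly Fq rest with hgdef
      set c := (opEval (sfun Fq F) g hd.1 hd.2) ^ Fintype.card Fq * hd.1
          / (opEval (sfun Fq F) g hd.1 hd.2) with hcdef
      have hstep : annPoly Fq (hd :: rest) = (X * g.map (frobQ Fq)) - C c * g := rfl
      rcases List.mem_cons.mp hp with rfl | hmem
      · rw [hstep, annPoly_step_eval]
        by_cases hv : opEval (sfun Fq F) g p.1 p.2 = 0
        · rw [hv, zero_pow Fintype.card_ne_zero, zero_mul, mul_zero, sub_zero]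
        · rw [hcdef, div_mul_cancel₀ _ hv, sub_self]
      · rw [hstep, annPoly_step_eval, ih p hmem, zero_pow Fintype.card_ne_zero,
          zero_mul, mul_zero, sub_zero]

end LILRS

open LILRS

/-- The minimum sum-subspace distance of the lifted `s`-interleaved linearized
Reed–Solomon code is `2(n_t − k + 1)`: any two codewords of distinct message
tuples have sum-subspace distance at least `2(n_t − k + 1)`, and this value is
attained. -/
theorem LILRS_min_distance (s ℓ k : ℕ) (hs : 1 ≤ s) (hk : 1 ≤ k)
    (n : Fin ℓ → ℕ) (hkn : k ≤ ∑ i, n i)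
    (a : Fin ℓ → F) (ha0 : ∀ i, a i ≠ 0)
    (ha : ∀ i j, i ≠ j →
      ¬∃ c : F, c ≠ 0 ∧ c ^ Fintype.card Fq * a i * c⁻¹ = a j)
    (β : (i : Fin ℓ) → Fin (n i) → F)
    (hβ : ∀ i, LinearIndependent Fq (β i)) :
    (∀ f g : Fin s → Polynomial F,
      (∀ l, (f l).degree < (k : WithBot ℕ)) → (∀ l, (g l).degree < (k : WithBot ℕ)) →
      f ≠ g →
      2 * ((∑ i, n i) - k + 1) ≤
        ∑ i, (Module.finrank Fq
            ↥(liftedSpace Fq (a i) (β i) f ⊔ liftedSpace Fq (a i) (β i) g) -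
          Module.finrank Fq
            ↥(liftedSpace Fq (a i) (β i) f ⊓ liftedSpace Fq (a i) (β i) g))) ∧
    (∃ f g : Fin s → Polynomial F,
      (∀ l, (f l).degree < (k : WithBot ℕ)) ∧ (∀ l, (g l).degree < (k : WithBot ℕ)) ∧
      f ≠ g ∧
      (∑ i, (Module.finrank Fq
            ↥(liftedSpace Fq (a i) (β i) f ⊔ liftedSpace Fq (a i) (β i) g) -
          Module.finrank Fq
            ↥(liftedSpace Fq (a i) (β i) f ⊓ liftedSpace Fq (a i) (β i) g))) =
        2 * ((∑ i, n i) - k + 1)) := by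
  classical
  constructor
  · -- lower bound on the distance of distinct codewords
    intro f g hf hg hfg
    obtain ⟨l0, hl0⟩ := Function.ne_iff.mp hfg
    have h0 : f l0 - g l0 ≠ 0 := sub_ne_zero.mpr hl0
    have hdeg : (f l0 - g l0).natDegree ≤ k - 1 := by
      have hdlt : (f l0 - g l0).degree < (k : WithBot ℕ) :=
        lt_of_le_of_lt (degree_sub_le _ _) (max_lt (hf l0) (hg l0))
      have := (natDegree_lt_iff_degree_lt h0).mpr hdlt
      omega
    have hfacts := fun i => lifted_facts (Fq := Fq) (a i) (β i) (hβ i) f g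
    have ht_le : ∀ i, Module.finrank Fq
        ↥(Submodule.span Fq (Set.range (β i))
          ⊓ LinearMap.ker (Tmap Fq (a i) f - Tmap Fq (a i) g))
        ≤ Module.finrank Fq (LinearMap.ker (opLinear Fq (a i) (f l0 - g l0))) := by
      intro i
      refine Submodule.finrank_mono ?_
      intro b hb
      rw [Submodule.mem_inf] at hb
      have hker := hb.2
      rw [LinearMap.mem_ker] at hker ⊢
      have hcomp := congrFun hker l0
      simp only [LinearMap.sub_apply, Pi.sub_apply, Pi.zero_apply, Tmap,
        LinearMap.pi_apply, opLinear_apply] at hcomp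
      rw [opLinear_apply, opEval_poly_sub, sub_eq_zero]
      rw [sub_eq_zero] at hcomp
      exact hcomp
    have hsumt : ∑ i, Module.finrank Fq
        ↥(Submodule.span Fq (Set.range (β i))
          ⊓ LinearMap.ker (Tmap Fq (a i) f - Tmap Fq (a i) g)) ≤ k - 1 :=
      le_trans (Finset.sum_le_sum fun i _ => ht_le i)
        (le_trans (sum_finrank_ker_le a ha0 ha _ h0) hdeg)
    have hterm : ∀ i, Module.finrank Fq
          ↥(liftedSpace Fq (a i) (β i) f ⊔ liftedSpace Fq (a i) (β i) g) -
        Module.finrank Fq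
          ↥(liftedSpace Fq (a i) (β i) f ⊓ liftedSpace Fq (a i) (β i) g)
        = 2 * n i - 2 * Module.finrank Fq
          ↥(Submodule.span Fq (Set.range (β i))
            ⊓ LinearMap.ker (Tmap Fq (a i) f - Tmap Fq (a i) g)) := by
      intro i
      obtain ⟨hsup, hinf, hle⟩ := hfacts i
      omega
    calc 2 * ((∑ i, n i) - k + 1)
        ≤ ∑ i, (2 * n i - 2 * Module.finrank Fq
            ↥(Submodule.span Fq (Set.range (β i))
              ⊓ LinearMap.ker (Tmap Fq (a i) f - Tmap Fq (a i) g))) := by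
          rw [Finset.sum_tsub_distrib Finset.univ
            (fun i _ => by have := (hfacts i).2.2; omega)]
          rw [← Finset.mul_sum, ← Finset.mul_sum]
          omega
      _ = _ := Finset.sum_congr rfl fun i _ => (hterm i).symm
  · -- attainment
    obtain ⟨m, hmle, hmsum⟩ := exists_pointwise_le n (k - 1) (by omega)
    set L : List (F × F) := (List.finRange ℓ).flatMap
      (fun i => (List.finRange (m i)).map
        (fun j => (a i, β i (Fin.castLE (hmle i) j)))) with hLdef
    obtain ⟨hmon, hdeg⟩ := annPoly_monic_deg (Fq := Fq) (F := F) L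
    have hLlen : L.length = k - 1 := by
      rw [hLdef, List.length_flatMap]
      have hfun : (List.length ∘ (fun i => (List.finRange (m i)).map
          (fun j => ((a i, β i (Fin.castLE (hmle i) j)) : F × F)))) = m := by
        funext i
        simp [List.length_map, List.length_finRange]
      simp only [List.length_map, List.length_finRange]
      rw [← Fin.sum_univ_def, hmsum]
    have h0 : annPoly Fq L ≠ 0 := hmon.ne_zero
    have hdegk : (annPoly Fq L).natDegree = k - 1 := by rw [hdeg, hLlen]
    refine ⟨fun _ => 0, fun l => if l = (⟨0, hs⟩ : Fin s) then annPoly Fq L else 0,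
      ?_, ?_, ?_, ?_⟩
    · intro l
      rw [degree_zero]
      exact lt_of_lt_of_le (WithBot.bot_lt_coe 0) (by exact_mod_cast Nat.zero_le k)
    · intro l
      show (if l = (⟨0, hs⟩ : Fin s) then annPoly Fq L else 0).degree < (k : WithBot ℕ)
      by_cases hl : l = (⟨0, hs⟩ : Fin s)
      · rw [if_pos hl, degree_eq_natDegree h0, hdegk]
        exact_mod_cast (by omega : k - 1 < k)
      · rw [if_neg hl, degree_zero]
        exact lt_of_lt_of_le (WithBot.bot_lt_coe 0) (by exact_mod_cast Nat.zero_le k)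
    · intro heq
      have h00 : (0 : F[X]) = annPoly Fq L := by simpa using congrFun heq (⟨0, hs⟩ : Fin s)
      exact h0 h00.symm
    · -- exact distance computation
      have hker_eq : ∀ i, LinearMap.ker
            (Tmap Fq (a i) (fun _ => (0 : F[X]))
              - Tmap Fq (a i) (fun l => if l = (⟨0, hs⟩ : Fin s) then annPoly Fq L else 0))
          = LinearMap.ker (opLinear Fq (a i) (annPoly Fq L)) := by
        intro i
        ext b
        rw [LinearMap.mem_ker, LinearMap.mem_ker]
        constructor
        · intro hb
          have hcomp := congrFun hb (⟨0, hs⟩ : Fin s)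
          simp only [LinearMap.sub_apply, Pi.sub_apply, Pi.zero_apply, Tmap,
            LinearMap.pi_apply, opLinear_apply, if_pos rfl, opEval_poly_zero] at hcomp
          rw [opLinear_apply]
          rw [zero_sub, neg_eq_zero] at hcomp
          exact hcomp
        · intro hb
          rw [opLinear_apply] at hb
          have : (Tmap Fq (a i) (fun _ => (0 : F[X])) b
              - Tmap Fq (a i) (fun l => if l = (⟨0, hs⟩ : Fin s) then annPoly Fq L else 0) b)
              = 0 := by
            funext l
            simp only [Pi.sub_apply, Pi.zero_apply, Tmap, LinearMap.pi_apply,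
              opLinear_apply, opEval_poly_zero]
            by_cases hl : l = (⟨0, hs⟩ : Fin s)
            · rw [if_pos hl, hb, sub_zero]
            · rw [if_neg hl, opEval_poly_zero, sub_zero]
          rw [LinearMap.sub_apply]
          exact this
      have hfacts := fun i => lifted_facts (Fq := Fq) (a i) (β i) (hβ i)
        (fun _ => (0 : F[X])) (fun l => if l = (⟨0, hs⟩ : Fin s) then annPoly Fq L else 0)
      have hlow : ∀ i, m i ≤ Module.finrank Fq
          ↥(Submodule.span Fq (Set.range (β i))
            ⊓ LinearMap.ker (opLinear Fq (a i) (annPoly Fq L))) := by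
        intro i
        have hind : LinearIndependent Fq
            (fun j : Fin (m i) => β i (Fin.castLE (hmle i) j)) :=
          (hβ i).comp _ (Fin.castLE_injective _)
        have hsub : Submodule.span Fq
              (Set.range (fun j : Fin (m i) => β i (Fin.castLE (hmle i) j)))
            ≤ Submodule.span Fq (Set.range (β i))
              ⊓ LinearMap.ker (opLinear Fq (a i) (annPoly Fq L)) := by
          refine le_inf (Submodule.span_mono ?_) ((Submodule.span_le).mpr ?_)
          · rintro x ⟨j, rfl⟩
            exact ⟨_, rfl⟩
          · rintro x ⟨j, rfl⟩
            have hmem : ((a i, β i (Fin.castLE (hmle i) j)) : F × F) ∈ L := by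
              rw [hLdef, List.mem_flatMap]
              exact ⟨i, List.mem_finRange i, List.mem_map.mpr ⟨j, List.mem_finRange j, rfl⟩⟩
            have hkill := annPoly_kills (Fq := Fq) L _ hmem
            rw [SetLike.mem_coe, LinearMap.mem_ker, opLinear_apply]
            exact hkill
        calc m i = Module.finrank Fq ↥(Submodule.span Fq
              (Set.range (fun j : Fin (m i) => β i (Fin.castLE (hmle i) j)))) := by
              rw [finrank_span_eq_card hind, Fintype.card_fin]
          _ ≤ _ := Submodule.finrank_mono hsub
      have hupp : ∑ i, Module.finrank Fq
          ↥(Submodule.span Fq (Set.range (β i))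
            ⊓ LinearMap.ker (opLinear Fq (a i) (annPoly Fq L))) ≤ k - 1 := by
        refine le_trans (Finset.sum_le_sum fun i _ =>
          Submodule.finrank_mono inf_le_right) ?_
        rw [← hdegk]
        exact sum_finrank_ker_le a ha0 ha _ h0
      have hsumT : ∑ i, Module.finrank Fq
          ↥(Submodule.span Fq (Set.range (β i))
            ⊓ LinearMap.ker (opLinear Fq (a i) (annPoly Fq L))) = k - 1 := by
        refine le_antisymm hupp ?_
        calc k - 1 = ∑ i, m i := hmsum.symm
          _ ≤ _ := Finset.sum_le_sum fun i _ => hlow i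
      have hterm : ∀ i, Module.finrank Fq
            ↥(liftedSpace Fq (a i) (β i) (fun _ => (0 : F[X]))
              ⊔ liftedSpace Fq (a i) (β i)
                  (fun l => if l = (⟨0, hs⟩ : Fin s) then annPoly Fq L else 0)) -
          Module.finrank Fq
            ↥(liftedSpace Fq (a i) (β i) (fun _ => (0 : F[X]))
              ⊓ liftedSpace Fq (a i) (β i)
                  (fun l => if l = (⟨0, hs⟩ : Fin s) then annPoly Fq L else 0))
          = 2 * n i - 2 * Module.finrank Fq
            ↥(Submodule.span Fq (Set.range (β i))
              ⊓ LinearMap.ker (opLinear Fq (a i) (annPoly Fq L))) := by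
        intro i
        obtain ⟨hsup, hinf', hle'⟩ := hfacts i
        rw [hker_eq i] at hinf' hle'
        omega
      have hTle : ∀ i, Module.finrank Fq
          ↥(Submodule.span Fq (Set.range (β i))
            ⊓ LinearMap.ker (opLinear Fq (a i) (annPoly Fq L))) ≤ n i := by
        intro i
        have hle' := (hfacts i).2.2
        rw [hker_eq i] at hle'
        exact hle'
      calc ∑ i, (Module.finrank Fq
            ↥(liftedSpace Fq (a i) (β i) (fun _ => (0 : F[X]))
              ⊔ liftedSpace Fq (a i) (β i)
                  (fun l => if l = (⟨0, hs⟩ : Fin s) then annPoly Fq L else 0)) -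
          Module.finrank Fq
            ↥(liftedSpace Fq (a i) (β i) (fun _ => (0 : F[X]))
              ⊓ liftedSpace Fq (a i) (β i)
                  (fun l => if l = (⟨0, hs⟩ : Fin s) then annPoly Fq L else 0)))
          = ∑ i, (2 * n i - 2 * Module.finrank Fq
            ↥(Submodule.span Fq (Set.range (β i))
              ⊓ LinearMap.ker (opLinear Fq (a i) (annPoly Fq L)))) :=
            Finset.sum_congr rfl fun i _ => hterm i
        _ = 2 * ((∑ i, n i) - k + 1) := by
            rw [Finset.sum_tsub_distrib Finset.univ
              (fun i _ => by have := hTle i; omega)]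
            rw [← Finset.mul_sum, ← Finset.mul_sum, hsumT]
            omega
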